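/- In the q-exponential identity, writing log(e_q^z) - z = Σ_{n≥2} (1-q)^n z^n / ((1-q^n) n) with q = e^{εℏ}, each coefficient of ε^k in the expansion of exp(Σ_{n≥2} (1-q)^n z^n/((1-q^n)n)) is a polynomial in z and ℏ whose z-degree is at most 2k; in particular the coefficient of ε^0 is 1. -/

import Mathlib

noncomputable section

/-- The ring `ℚ[[ε, ℏ, z]]` (variables `0 = ε`, `1 = ℏ`, `2 = z`). -/
abbrev R3 : Type := MvPowerSeries (Fin 3) ℚ

/-- The truncated exponential `exp E = Σ_k E^k/k!`, valid for `E` with zero constant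
term (only `k ≤ |m|` contributes to the coefficient at a multi-index `m`). -/
def expR (E : R3) : R3 :=
  fun m => ∑ k ∈ Finset.range (m.sum (fun _ e => e) + 1),
    ((k.factorial : ℚ)⁻¹) • MvPowerSeries.coeff (R := ℚ) m (E ^ k)

/-- `D = (1 - e^{εℏ})/(εℏ) = -Σ_{k≥0} (εℏ)^k/(k+1)!`. -/
def Dser : R3 :=
  fun m => if m 2 = 0 ∧ m 0 = m 1 then -(1 : ℚ) / ((m 0 + 1).factorial : ℚ) else 0

/-- `E_n = (1 - e^{nεℏ})/(εℏ) = -Σ_{k≥0} n^{k+1}(εℏ)^k/(k+1)!`; its constant term is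
`-n`, so it is invertible for `n ≥ 1`. -/
def Eser (n : ℕ) : R3 :=
  fun m => if m 2 = 0 ∧ m 0 = m 1 then -((n : ℚ) ^ (m 0 + 1)) / ((m 0 + 1).factorial : ℚ)
    else 0

/-- `c_n = (1-q)^n/((1-q^n)·n) = D^n · (εℏ)^{n-1} · E_n⁻¹ · n⁻¹` with `q = e^{εℏ}`. -/
def cSer (n : ℕ) : R3 :=
  Dser ^ n * (MvPowerSeries.X 0 * MvPowerSeries.X 1) ^ (n - 1) * (Eser n)⁻¹ *
    MvPowerSeries.C (σ := Fin 3) (R := ℚ) ((n : ℚ)⁻¹)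

/-- `S = Σ_{n≥2} c_n z^n = Σ_{n≥2} (1-q)^n z^n/((1-q^n)n)`; the coefficient of a
multi-index `m` only receives a contribution from `n = m(z)`. -/
def Sser : R3 :=
  fun m => if 2 ≤ m 2 then
    MvPowerSeries.coeff (R := ℚ) m (cSer (m 2) * MvPowerSeries.X 2 ^ (m 2)) else 0

/-- A multi-index `ε^k ℏ^i z^j`. -/
def idx3 (k i j : ℕ) : Fin 3 →₀ ℕ :=
  Finsupp.single 0 k + Finsupp.single 1 i + Finsupp.single 2 j

/-! ### Auxiliary lemmas -/

/-- The "diagonal" support predicate: no `z`, equal powers of `ε` and `ℏ`. -/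
def Dg (m : Fin 3 →₀ ℕ) : Prop := m 2 = 0 ∧ m 0 = m 1

lemma Dg_zero : Dg 0 := ⟨rfl, rfl⟩

lemma Dg_add {a b : Fin 3 →₀ ℕ} (ha : Dg a) (hb : Dg b) : Dg (a + b) := by
  obtain ⟨ha1, ha2⟩ := ha; obtain ⟨hb1, hb2⟩ := hb
  refine ⟨?_, ?_⟩ <;> simp only [Finsupp.add_apply] <;> omega

lemma mul_split {f g : R3} {m : Fin 3 →₀ ℕ} (h : MvPowerSeries.coeff (R := ℚ) m (f * g) ≠ 0) :
    ∃ a b : Fin 3 →₀ ℕ, a + b = m ∧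
      MvPowerSeries.coeff (R := ℚ) a f ≠ 0 ∧ MvPowerSeries.coeff (R := ℚ) b g ≠ 0 := by
  rw [MvPowerSeries.coeff_mul] at h
  obtain ⟨p, hp, hne⟩ := Finset.exists_ne_zero_of_sum_ne_zero h
  exact ⟨p.1, p.2, Finset.HasAntidiagonal.mem_antidiagonal.mp hp,
    left_ne_zero_of_mul hne, right_ne_zero_of_mul hne⟩

lemma degree_pos {a : Fin 3 →₀ ℕ} (ha : a ≠ 0) : 0 < a.sum fun _ e => e := by
  rcases Finsupp.ne_iff.mp ha with ⟨i, hi⟩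
  simp only [Finsupp.coe_zero, Pi.zero_apply] at hi
  calc 0 < a i := Nat.pos_of_ne_zero hi
    _ ≤ a.sum fun _ e => e :=
      Finset.single_le_sum (f := fun j => a j) (fun _ _ => Nat.zero_le _)
        (Finsupp.mem_support_iff.mpr hi)

lemma degree_add (a b : Fin 3 →₀ ℕ) :
    ((a + b).sum fun _ e => e) = (a.sum fun _ e => e) + (b.sum fun _ e => e) :=
  Finsupp.sum_add_index' (fun _ => rfl) (fun _ _ _ => rfl)

lemma Dser_supp {m : Fin 3 →₀ ℕ} (h : MvPowerSeries.coeff (R := ℚ) m Dser ≠ 0) : Dg m := by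
  rw [MvPowerSeries.coeff_apply] at h
  by_contra hD
  exact h (if_neg hD)

lemma Eser_supp {n : ℕ} {m : Fin 3 →₀ ℕ} (h : MvPowerSeries.coeff (R := ℚ) m (Eser n) ≠ 0) : Dg m := by
  rw [MvPowerSeries.coeff_apply] at h
  by_contra hD
  exact h (if_neg hD)

lemma pow_supp {f : R3} (hf : ∀ m, MvPowerSeries.coeff (R := ℚ) m f ≠ 0 → Dg m) :
    ∀ t m, MvPowerSeries.coeff (R := ℚ) m (f ^ t) ≠ 0 → Dg m := by
  intro t
  induction t with
  | zero =>
    intro m h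
    rw [pow_zero, MvPowerSeries.coeff_one] at h
    rcases eq_or_ne m 0 with rfl | hm
    · exact Dg_zero
    · exact absurd (if_neg hm) h
  | succ t ih =>
    intro m h
    rw [pow_succ] at h
    obtain ⟨a, b, hab, ha, hb⟩ := mul_split h
    exact hab ▸ Dg_add (ih a ha) (hf b hb)

lemma inv_supp {f : R3} (hf : ∀ m, MvPowerSeries.coeff (R := ℚ) m f ≠ 0 → Dg m) :
    ∀ N (m : Fin 3 →₀ ℕ), (m.sum fun _ e => e) = N →
      MvPowerSeries.coeff (R := ℚ) m f⁻¹ ≠ 0 → Dg m := by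
  intro N
  induction N using Nat.strong_induction_on with
  | _ N ih =>
    intro m hm h
    rcases eq_or_ne m 0 with rfl | h0
    · exact Dg_zero
    by_contra hD
    apply h
    rw [MvPowerSeries.coeff_inv, if_neg h0]
    rw [show (∑ x ∈ Finset.HasAntidiagonal.antidiagonal m,
        if x.2 < m then MvPowerSeries.coeff (R := ℚ) x.1 f * MvPowerSeries.coeff (R := ℚ) x.2 f⁻¹ else 0)
        = 0 from ?_, mul_zero]
    apply Finset.sum_eq_zero
    intro x hx
    rw [Finset.HasAntidiagonal.mem_antidiagonal] at hx
    split_ifs with hlt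
    · by_cases h1 : MvPowerSeries.coeff (R := ℚ) x.1 f = 0
      · rw [h1, zero_mul]
      by_cases h2 : MvPowerSeries.coeff (R := ℚ) x.2 f⁻¹ = 0
      · rw [h2, mul_zero]
      exfalso
      have hx1 : x.1 ≠ 0 := by
        rintro hx1
        rw [hx1, zero_add] at hx
        exact absurd (hx ▸ hlt) (lt_irrefl _)
      have hlt' : (x.2.sum fun _ e => e) < N := by
        have := degree_add x.1 x.2
        rw [hx, hm] at this
        have := degree_pos hx1
        omega
      exact hD (hx ▸ Dg_add (hf _ h1) (ih _ hlt' x.2 rfl h2))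
    · rfl

lemma XX_supp : ∀ t (m : Fin 3 →₀ ℕ),
    MvPowerSeries.coeff (R := ℚ) m ((MvPowerSeries.X 0 * MvPowerSeries.X 1 : R3) ^ t) ≠ 0 →
      Dg m ∧ m 0 = t := by
  intro t
  induction t with
  | zero =>
    intro m h
    rw [pow_zero, MvPowerSeries.coeff_one] at h
    rcases eq_or_ne m 0 with rfl | hm
    · exact ⟨Dg_zero, rfl⟩
    · exact absurd (if_neg hm) h
  | succ t ih =>
    intro m h
    rw [pow_succ] at h
    obtain ⟨a, b, hab, ha, hb⟩ := mul_split h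
    obtain ⟨hda, ha0⟩ := ih a ha
    obtain ⟨c, d, hcd, hc, hd⟩ := mul_split hb
    rw [MvPowerSeries.coeff_X] at hc hd
    have hc' : c = Finsupp.single 0 1 := by
      by_contra hne; exact hc (if_neg hne)
    have hd' : d = Finsupp.single 1 1 := by
      by_contra hne; exact hd (if_neg hne)
    subst hc' hd'
    subst hcd
    subst hab
    obtain ⟨hda1, hda2⟩ := hda
    constructor
    · constructor <;> simp [Finsupp.add_apply, Finsupp.single_apply, hda1, hda2]
    · simp [Finsupp.add_apply, Finsupp.single_apply, ha0]

lemma cSer_supp {n : ℕ} {m : Fin 3 →₀ ℕ} (h : MvPowerSeries.coeff (R := ℚ) m (cSer n) ≠ 0) :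
    Dg m ∧ n - 1 ≤ m 0 := by
  unfold cSer at h
  obtain ⟨a, b, hab, ha, hb⟩ := mul_split h
  obtain ⟨c, d, hcd, hc, hd⟩ := mul_split ha
  obtain ⟨e, g, heg, he, hg⟩ := mul_split hc
  -- e : Dser ^ n, g : (X0*X1)^(n-1), d : (Eser n)⁻¹, b : C (n⁻¹)
  have hDe : Dg e := pow_supp (fun _ => Dser_supp) n e he
  obtain ⟨hDg, hg0⟩ := XX_supp (n - 1) g hg
  have hDd : Dg d := inv_supp (fun _ => Eser_supp) _ d rfl hd
  have hDb : Dg b := by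
    rw [MvPowerSeries.coeff_C] at hb
    rcases eq_or_ne b 0 with rfl | hbne
    · exact Dg_zero
    · exact absurd (if_neg hbne) hb
  subst heg hcd hab
  refine ⟨Dg_add (Dg_add (Dg_add hDe hDg) hDd) hDb, ?_⟩
  simp only [Finsupp.add_apply]
  omega

lemma Sser_supp {m : Fin 3 →₀ ℕ} (h : MvPowerSeries.coeff (R := ℚ) m Sser ≠ 0) :
    m 0 = m 1 ∧ 2 ≤ m 2 ∧ m 2 ≤ m 0 + 1 := by
  rw [MvPowerSeries.coeff_apply] at h
  unfold Sser at h
  by_cases h2 : 2 ≤ m 2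
  swap
  · exact absurd (if_neg h2) h
  rw [if_pos h2] at h
  obtain ⟨a, b, hab, ha, hb⟩ := mul_split h
  rw [MvPowerSeries.coeff_X_pow] at hb
  have hb' : b = Finsupp.single 2 (m 2) := by
    by_contra hne; exact hb (if_neg hne)
  subst hb'
  obtain ⟨⟨ha2, ha01⟩, han⟩ := cSer_supp ha
  have e0 := congrArg (fun f : Fin 3 →₀ ℕ => f 0) hab
  have e1 := congrArg (fun f : Fin 3 →₀ ℕ => f 1) hab
  simp only [Finsupp.add_apply, Finsupp.single_apply, show ((2:Fin 3) = 0) = False by simp,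
    show ((2:Fin 3) = 1) = False by simp, if_false, add_zero] at e0 e1
  omega

lemma Spow_supp : ∀ t (m : Fin 3 →₀ ℕ), MvPowerSeries.coeff (R := ℚ) m (Sser ^ t) ≠ 0 →
    m 0 = m 1 ∧ m 2 ≤ 2 * m 0 ∧ t ≤ m 0 := by
  intro t
  induction t with
  | zero =>
    intro m h
    rw [pow_zero, MvPowerSeries.coeff_one] at h
    rcases eq_or_ne m 0 with rfl | hm
    · exact ⟨rfl, by simp, by simp⟩
    · exact absurd (if_neg hm) h
  | succ t ih =>
    intro m h
    rw [pow_succ] at h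
    obtain ⟨a, b, hab, ha, hb⟩ := mul_split h
    obtain ⟨ha01, ha2, hat⟩ := ih a ha
    obtain ⟨hb01, hb2, hb2'⟩ := Sser_supp hb
    subst hab
    simp only [Finsupp.add_apply]
    omega

lemma exp_supp {m : Fin 3 →₀ ℕ} (h : MvPowerSeries.coeff (R := ℚ) m (expR Sser) ≠ 0) :
    m = 0 ∨ (m 0 = m 1 ∧ m 2 ≤ 2 * m 0 ∧ 1 ≤ m 0) := by
  rw [MvPowerSeries.coeff_apply] at h
  unfold expR at h
  obtain ⟨t, _, ht⟩ := Finset.exists_ne_zero_of_sum_ne_zero h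
  have ht' : MvPowerSeries.coeff (R := ℚ) m (Sser ^ t) ≠ 0 := by
    intro h0; rw [h0, smul_zero] at ht; exact ht rfl
  rcases Nat.eq_zero_or_pos t with rfl | htpos
  · left
    rw [pow_zero, MvPowerSeries.coeff_one] at ht'
    by_contra hm
    exact ht' (if_neg hm)
  · right
    obtain ⟨h1, h2, h3⟩ := Spow_supp t m ht'
    exact ⟨h1, h2, le_trans htpos h3⟩

lemma idx3_apply0 (k i j : ℕ) : idx3 k i j 0 = k := by simp [idx3]
lemma idx3_apply1 (k i j : ℕ) : idx3 k i j 1 = i := by simp [idx3]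
lemma idx3_apply2 (k i j : ℕ) : idx3 k i j 2 = j := by simp [idx3]

lemma idx3_eq_zero_iff (k i j : ℕ) : idx3 k i j = 0 ↔ k = 0 ∧ i = 0 ∧ j = 0 := by
  constructor
  · intro h
    refine ⟨?_, ?_, ?_⟩
    · rw [← idx3_apply0 k i j, h]; rfl
    · rw [← idx3_apply1 k i j, h]; rfl
    · rw [← idx3_apply2 k i j, h]; rfl
  · rintro ⟨rfl, rfl, rfl⟩
    simp [idx3]

/-- Writing `log(e_q^z) - z = Σ_{n≥2} (1-q)^n z^n/((1-q^n)n)` with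
`q = e^{εℏ}`, in `F = exp(Σ_{n≥2} (1-q)^n z^n/((1-q^n)n))` the coefficient of `ε^k`
is a polynomial in `z` and `ℏ` (only finitely many `(ℏ,z)`-monomials occur) whose
`z`-degree is at most `2k`; the coefficient of `ε^0` is `1`. -/
theorem faddeev_perturbation_degree :
    (∀ k : ℕ,
        {p : ℕ × ℕ | MvPowerSeries.coeff (R := ℚ) (idx3 k p.1 p.2) (expR Sser) ≠ 0}.Finite ∧
        ∀ i j : ℕ, MvPowerSeries.coeff (R := ℚ) (idx3 k i j) (expR Sser) ≠ 0 → j ≤ 2 * k) ∧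
      ∀ i j : ℕ, MvPowerSeries.coeff (R := ℚ) (idx3 0 i j) (expR Sser) =
        if i = 0 ∧ j = 0 then 1 else 0 := by
  have key : ∀ k i j : ℕ, MvPowerSeries.coeff (R := ℚ) (idx3 k i j) (expR Sser) ≠ 0 →
      (k = 0 ∧ i = 0 ∧ j = 0) ∨ (i = k ∧ j ≤ 2 * k) := by
    intro k i j h
    rcases exp_supp h with h0 | ⟨h1, h2, _⟩
    · exact Or.inl ((idx3_eq_zero_iff k i j).mp h0)
    · rw [idx3_apply0, idx3_apply1] at h1
      rw [idx3_apply2, idx3_apply0] at h2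
      exact Or.inr ⟨h1.symm, h2⟩
  refine ⟨fun k => ⟨?_, fun i j h => ?_⟩, fun i j => ?_⟩
  · apply Set.Finite.subset
      (Finset.finite_toSet (insert (0, 0) ((Finset.range (2 * k + 1)).image fun j => (k, j))))
    intro p hp
    rcases key k p.1 p.2 hp with ⟨_, hi, hj⟩ | ⟨hi, hj⟩
    · simp only [Finset.coe_insert, Set.mem_insert_iff]
      left
      exact Prod.ext hi hj
    · simp only [Finset.coe_insert, Set.mem_insert_iff, Finset.coe_image, Set.mem_image,
        Finset.mem_coe, Finset.mem_range]
      right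
      exact ⟨p.2, by omega, Prod.ext hi.symm rfl⟩
  · rcases key k i j h with ⟨hk, _, hj⟩ | ⟨_, hj⟩
    · omega
    · exact hj
  · rw [MvPowerSeries.coeff_apply]
    unfold expR
    rw [Finset.sum_eq_single 0]
    · rw [pow_zero, Nat.factorial_zero, Nat.cast_one, inv_one, one_smul,
        MvPowerSeries.coeff_one]
      have : (idx3 0 i j = 0) ↔ (i = 0 ∧ j = 0) := by
        rw [idx3_eq_zero_iff]; tauto
      split_ifs with h1 h2 h2
      · rfl
      · exact absurd (this.mp h1) h2
      · exact absurd (this.mpr h2) h1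
      · rfl
    · intro t _ ht0
      rw [smul_eq_zero]
      right
      by_contra hne
      obtain ⟨_, _, h3⟩ := Spow_supp t _ hne
      rw [idx3_apply0] at h3
      omega
    · intro habs
      exact absurd (Finset.mem_range.mpr (Nat.succ_pos _)) habs
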